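/- For each ρ₀ ∈ [0,1], the function Π_{ρ₀}(y) = 1/y - Υ_{ρ₀}'(y)/Υ_{ρ₀}(y) + ρ₀/2 - γ (with Υ_{ρ₀}(x) = ρ₀Γ(x+2) + (1-ρ₀)Γ(x+1)) is strictly decreasing on (0,∞), tends to +∞ as y → 0⁺ and to -∞ as y → ∞; hence it has a unique zero ϖ_{ρ₀} ∈ (0,∞), and since Π_{ρ₀}(1) ≤ 0 this zero satisfies ϖ_{ρ₀} ∈ (0,1]. -/

import Mathlib

open Real Filter Set

/-- `Υ_{ρ₀}(x) = ρ₀ Γ(x+2) + (1-ρ₀) Γ(x+1)`. -/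
noncomputable def Upsilon (ρ₀ : ℝ) (x : ℝ) : ℝ :=
  ρ₀ * Real.Gamma (x + 2) + (1 - ρ₀) * Real.Gamma (x + 1)

/-- `Π_{ρ₀}(y) = 1/y - Υ_{ρ₀}'(y)/Υ_{ρ₀}(y) + ρ₀/2 - γ`. -/
noncomputable def PiFun (ρ₀ : ℝ) (y : ℝ) : ℝ :=
  1 / y - deriv (Upsilon ρ₀) y / Upsilon ρ₀ y + ρ₀ / 2 - Real.eulerMascheroniConstant

/-- Two-point Hölder inequality. -/
lemma holder_two {a b u₁ u₂ v₁ v₂ : ℝ} (ha : 0 < a) (hb : 0 < b) (hab : a + b = 1)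
    (hu₁ : 0 ≤ u₁) (hu₂ : 0 ≤ u₂) (hv₁ : 0 ≤ v₁) (hv₂ : 0 ≤ v₂) :
    u₁ ^ a * v₁ ^ b + u₂ ^ a * v₂ ^ b ≤ (u₁ + u₂) ^ a * (v₁ + v₂) ^ b := by
  rcases eq_or_lt_of_le (by positivity : (0:ℝ) ≤ u₁ + u₂) with hU | hU
  · have h1 : u₁ = 0 := by linarith
    have h2 : u₂ = 0 := by linarith
    simp [h1, h2, Real.zero_rpow ha.ne']
  rcases eq_or_lt_of_le (by positivity : (0:ℝ) ≤ v₁ + v₂) with hV | hV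
  · have h1 : v₁ = 0 := by linarith
    have h2 : v₂ = 0 := by linarith
    simp [h1, h2, Real.zero_rpow hb.ne']
  set U := u₁ + u₂ with hUdef
  set V := v₁ + v₂ with hVdef
  have key : ∀ u v : ℝ, 0 ≤ u → 0 ≤ v →
      u ^ a * v ^ b ≤ (a * (u / U) + b * (v / V)) * (U ^ a * V ^ b) := by
    intro u v hu hv
    have h1 : (u / U) ^ a * (v / V) ^ b ≤ a * (u / U) + b * (v / V) :=
      Real.geom_mean_le_arith_mean2_weighted ha.le hb.le
        (div_nonneg hu hU.le) (div_nonneg hv hV.le) hab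
    have h2 : (u / U) ^ a * (v / V) ^ b * (U ^ a * V ^ b) = u ^ a * v ^ b := by
      rw [Real.div_rpow hu hU.le, Real.div_rpow hv hV.le]
      field_simp
    calc u ^ a * v ^ b = (u / U) ^ a * (v / V) ^ b * (U ^ a * V ^ b) := h2.symm
      _ ≤ (a * (u / U) + b * (v / V)) * (U ^ a * V ^ b) := by
          apply mul_le_mul_of_nonneg_right h1 (by positivity)
  calc u₁ ^ a * v₁ ^ b + u₂ ^ a * v₂ ^ b
      ≤ (a * (u₁ / U) + b * (v₁ / V)) * (U ^ a * V ^ b)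
        + (a * (u₂ / U) + b * (v₂ / V)) * (U ^ a * V ^ b) :=
        add_le_add (key u₁ v₁ hu₁ hv₁) (key u₂ v₂ hu₂ hv₂)
    _ = (a * (U / U) + b * (V / V)) * (U ^ a * V ^ b) := by rw [hUdef, hVdef]; ring
    _ = U ^ a * V ^ b := by
        rw [div_self hU.ne', div_self hV.ne']
        rw [mul_one, mul_one, hab, one_mul]

lemma Upsilon_pos {ρ₀ : ℝ} (hρ : ρ₀ ∈ Set.Icc (0:ℝ) 1) {x : ℝ} (hx : -1 < x) :
    0 < Upsilon ρ₀ x := by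
  have h1 : 0 < Real.Gamma (x + 2) := Real.Gamma_pos_of_pos (by linarith)
  have h2 : 0 < Real.Gamma (x + 1) := Real.Gamma_pos_of_pos (by linarith)
  have h0 := hρ.1
  have h1' := hρ.2
  unfold Upsilon
  rcases eq_or_lt_of_le h0 with h | h
  · rw [← h]; simpa using h2
  · have : 0 ≤ (1 - ρ₀) * Real.Gamma (x + 1) := by
      apply mul_nonneg (by linarith) h2.le
    nlinarith [mul_pos h h1]

/-- Derivative of the shifted Gamma function. -/
lemma hasDerivAt_Gamma_shift (c : ℝ) {x : ℝ} (hx : 0 < x + c) :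
    HasDerivAt (fun t : ℝ => Real.Gamma (t + c)) (deriv Real.Gamma (x + c)) x := by
  have hd : DifferentiableAt ℝ Real.Gamma (x + c) :=
    Real.differentiableAt_Gamma (fun m => by
      have : (0:ℝ) ≤ m := Nat.cast_nonneg m
      intro h; rw [h] at hx; linarith)
  have := hd.hasDerivAt.comp x ((hasDerivAt_id x).add_const c)
  exact this.congr_deriv (mul_one _)

noncomputable def UpsD (ρ₀ x : ℝ) : ℝ :=
  ρ₀ * deriv Real.Gamma (x + 2) + (1 - ρ₀) * deriv Real.Gamma (x + 1)

lemma hasDerivAt_Upsilon (ρ₀ : ℝ) {x : ℝ} (hx : -1 < x) :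
    HasDerivAt (Upsilon ρ₀) (UpsD ρ₀ x) x := by
  have h2 := (hasDerivAt_Gamma_shift 2 (by linarith : (0:ℝ) < x + 2)).const_mul ρ₀
  have h1 := (hasDerivAt_Gamma_shift 1 (by linarith : (0:ℝ) < x + 1)).const_mul (1 - ρ₀)
  exact h2.add h1

lemma deriv_Upsilon (ρ₀ : ℝ) {x : ℝ} (hx : -1 < x) :
    deriv (Upsilon ρ₀) x = UpsD ρ₀ x := (hasDerivAt_Upsilon ρ₀ hx).deriv

/-- Log-convexity of `Upsilon`. -/
lemma convexOn_log_Upsilon {ρ₀ : ℝ} (hρ : ρ₀ ∈ Set.Icc (0:ℝ) 1) :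
    ConvexOn ℝ (Set.Ioi (0:ℝ)) (fun x => Real.log (Upsilon ρ₀ x)) := by
  refine ⟨convex_Ioi 0, ?_⟩
  intro x hx y hy a b ha hb hab
  rcases eq_or_lt_of_le ha with rfl | ha'
  · have hb1 : b = 1 := by linarith
    simp [hb1]
  rcases eq_or_lt_of_le hb with rfl | hb'
  · have ha1 : a = 1 := by linarith
    simp [ha1]
  simp only [smul_eq_mul] at *
  have hx0 : (0:ℝ) < x := hx
  have hy0 : (0:ℝ) < y := hy
  have hmix : 0 < a * x + b * y := by positivity
  have hkey : ∀ c : ℝ, 0 < c →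
      Real.Gamma (a * x + b * y + c) ≤ Real.Gamma (x + c) ^ a * Real.Gamma (y + c) ^ b := by
    intro c hc
    have : a * x + b * y + c = a * (x + c) + b * (y + c) := by
      have : a * c + b * c = c := by rw [← add_mul, hab, one_mul]
      ring_nf
      linarith [this]
    rw [this]
    exact Real.Gamma_mul_add_mul_le_rpow_Gamma_mul_rpow_Gamma (by linarith) (by linarith)
      ha' hb' hab
  have hρa : ρ₀ = ρ₀ ^ a * ρ₀ ^ b := by
    rw [← Real.rpow_add' hρ.1 (by rw [hab]; norm_num), hab, Real.rpow_one]
  have hρb : (1 - ρ₀) = (1 - ρ₀) ^ a * (1 - ρ₀) ^ b := by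
    rw [← Real.rpow_add' (by linarith [hρ.2]) (by rw [hab]; norm_num), hab, Real.rpow_one]
  have hΓ : ∀ c : ℝ, 0 < c → (0:ℝ) < Real.Gamma (x + c) ∧ (0:ℝ) < Real.Gamma (y + c) :=
    fun c hc => ⟨Real.Gamma_pos_of_pos (by linarith), Real.Gamma_pos_of_pos (by linarith)⟩
  obtain ⟨hΓx2, hΓy2⟩ := hΓ 2 (by norm_num)
  obtain ⟨hΓx1, hΓy1⟩ := hΓ 1 (by norm_num)
  have step1 : Upsilon ρ₀ (a * x + b * y) ≤ Upsilon ρ₀ x ^ a * Upsilon ρ₀ y ^ b := by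
    unfold Upsilon
    have h2 := hkey 2 (by norm_num)
    have h1 := hkey 1 (by norm_num)
    have hρ0 := hρ.1
    have hρ1 : 0 ≤ 1 - ρ₀ := by linarith [hρ.2]
    calc ρ₀ * Real.Gamma (a * x + b * y + 2) + (1 - ρ₀) * Real.Gamma (a * x + b * y + 1)
        ≤ ρ₀ * (Real.Gamma (x + 2) ^ a * Real.Gamma (y + 2) ^ b)
          + (1 - ρ₀) * (Real.Gamma (x + 1) ^ a * Real.Gamma (y + 1) ^ b) := by
          apply add_le_add (mul_le_mul_of_nonneg_left h2 hρ0)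
            (mul_le_mul_of_nonneg_left h1 hρ1)
      _ = (ρ₀ ^ a * ρ₀ ^ b) * (Real.Gamma (x + 2) ^ a * Real.Gamma (y + 2) ^ b)
          + ((1 - ρ₀) ^ a * (1 - ρ₀) ^ b) * (Real.Gamma (x + 1) ^ a * Real.Gamma (y + 1) ^ b) := by
          rw [← hρa, ← hρb]
      _ = (ρ₀ * Real.Gamma (x + 2)) ^ a * (ρ₀ * Real.Gamma (y + 2)) ^ b
          + ((1 - ρ₀) * Real.Gamma (x + 1)) ^ a * ((1 - ρ₀) * Real.Gamma (y + 1)) ^ b := by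
          rw [Real.mul_rpow hρ0 hΓx2.le, Real.mul_rpow hρ0 hΓy2.le,
            Real.mul_rpow hρ1 hΓx1.le, Real.mul_rpow hρ1 hΓy1.le]
          ring
      _ ≤ (ρ₀ * Real.Gamma (x + 2) + (1 - ρ₀) * Real.Gamma (x + 1)) ^ a
          * (ρ₀ * Real.Gamma (y + 2) + (1 - ρ₀) * Real.Gamma (y + 1)) ^ b :=
          holder_two ha' hb' hab (by positivity) (by positivity) (by positivity) (by positivity)
  have hUx : 0 < Upsilon ρ₀ x := Upsilon_pos hρ (by linarith)
  have hUy : 0 < Upsilon ρ₀ y := Upsilon_pos hρ (by linarith)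
  have hUm : 0 < Upsilon ρ₀ (a * x + b * y) := Upsilon_pos hρ (by linarith)
  calc Real.log (Upsilon ρ₀ (a * x + b * y)) ≤ Real.log (Upsilon ρ₀ x ^ a * Upsilon ρ₀ y ^ b) :=
        Real.log_le_log hUm step1
    _ = a * Real.log (Upsilon ρ₀ x) + b * Real.log (Upsilon ρ₀ y) := by
        rw [Real.log_mul (by positivity) (by positivity), Real.log_rpow hUx, Real.log_rpow hUy]

lemma hasDerivAt_log_Upsilon {ρ₀ : ℝ} (hρ : ρ₀ ∈ Set.Icc (0:ℝ) 1) {x : ℝ} (hx : 0 < x) :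
    HasDerivAt (fun y => Real.log (Upsilon ρ₀ y)) (UpsD ρ₀ x / Upsilon ρ₀ x) x :=
  (hasDerivAt_Upsilon ρ₀ (by linarith)).log (Upsilon_pos hρ (by linarith)).ne'

lemma PiFun_eq {ρ₀ : ℝ} {y : ℝ} (hy : 0 < y) :
    PiFun ρ₀ y = 1 / y - UpsD ρ₀ y / Upsilon ρ₀ y + ρ₀ / 2 - Real.eulerMascheroniConstant := by
  unfold PiFun
  rw [deriv_Upsilon ρ₀ (by linarith)]

lemma hasDerivAt_PiFun_primitive {ρ₀ : ℝ} (hρ : ρ₀ ∈ Set.Icc (0:ℝ) 1) {x : ℝ} (hx : 0 < x) :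
    HasDerivAt (fun y => Real.log y - Real.log (Upsilon ρ₀ y)
      + (ρ₀ / 2 - Real.eulerMascheroniConstant) * y) (PiFun ρ₀ x) x := by
  have h := ((Real.hasDerivAt_log hx.ne').sub (hasDerivAt_log_Upsilon hρ hx)).add
    ((hasDerivAt_id x).const_mul (ρ₀ / 2 - Real.eulerMascheroniConstant))
  refine h.congr_deriv ?_
  rw [PiFun_eq hx]
  ring

lemma deriv_Gamma_two : deriv Real.Gamma 2 = 1 - Real.eulerMascheroniConstant := by
  have h := Real.deriv_Gamma_nat 1
  norm_num [harmonic_succ] at h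
  rw [h]; ring

lemma deriv_Gamma_three : deriv Real.Gamma 3 = 3 - 2 * Real.eulerMascheroniConstant := by
  have h := Real.deriv_Gamma_nat 2
  have h2 : harmonic 2 = 3/2 := by
    simp [harmonic_succ]
    norm_num
  rw [h2] at h
  norm_num at h
  rw [h]
  ring

lemma Gamma_three : Real.Gamma 3 = 2 := by
  rw [show (3:ℝ) = 2 + 1 by norm_num, Real.Gamma_add_one two_ne_zero, Real.Gamma_two]
  norm_num

lemma PiFun_one_nonpos {ρ₀ : ℝ} (hρ : ρ₀ ∈ Set.Icc (0:ℝ) 1) : PiFun ρ₀ 1 ≤ 0 := by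
  have hU1 : Upsilon ρ₀ 1 = 1 + ρ₀ := by
    unfold Upsilon
    norm_num [Gamma_three, Real.Gamma_two]
    ring
  have hD1 : UpsD ρ₀ 1 = (1 - Real.eulerMascheroniConstant) + ρ₀ * (2 - Real.eulerMascheroniConstant) := by
    unfold UpsD
    norm_num [deriv_Gamma_two, deriv_Gamma_three]
    ring
  have h1ρ : (0:ℝ) < 1 + ρ₀ := by linarith [hρ.1]
  have : PiFun ρ₀ 1 = ρ₀ * (ρ₀ - 1) / (2 * (1 + ρ₀)) := by
    rw [PiFun_eq one_pos, hU1, hD1]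
    field_simp
    ring
  rw [this]
  apply div_nonpos_of_nonpos_of_nonneg
  · nlinarith [hρ.1, hρ.2]
  · linarith

theorem PiFun_strictAnti_unique_zero (ρ₀ : ℝ) (hρ : ρ₀ ∈ Set.Icc (0:ℝ) 1) :
    StrictAntiOn (PiFun ρ₀) (Set.Ioi (0:ℝ)) ∧
    Tendsto (PiFun ρ₀) (nhdsWithin 0 (Set.Ioi (0:ℝ))) atTop ∧
    Tendsto (PiFun ρ₀) atTop atBot ∧
    (∃! y : ℝ, y ∈ Set.Ioi (0:ℝ) ∧ PiFun ρ₀ y = 0) ∧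
    (∀ y : ℝ, y ∈ Set.Ioi (0:ℝ) → PiFun ρ₀ y = 0 → y ∈ Set.Ioc (0:ℝ) 1) := by
  have hUpos : ∀ y : ℝ, 0 < y → 0 < Upsilon ρ₀ y := fun y hy => Upsilon_pos hρ (by linarith)
  have hlogd : ∀ y ∈ Set.Ioi (0:ℝ), DifferentiableAt ℝ (fun t => Real.log (Upsilon ρ₀ t)) y :=
    fun y hy => (hasDerivAt_log_Upsilon hρ hy).differentiableAt
  have hφeq : ∀ y ∈ Set.Ioi (0:ℝ),
      deriv (fun t => Real.log (Upsilon ρ₀ t)) y = UpsD ρ₀ y / Upsilon ρ₀ y :=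
    fun y hy => (hasDerivAt_log_Upsilon hρ hy).deriv
  have hmono : MonotoneOn (fun y => UpsD ρ₀ y / Upsilon ρ₀ y) (Set.Ioi (0:ℝ)) := by
    have h := (convexOn_log_Upsilon hρ).monotoneOn_deriv hlogd
    intro x hx y hy hxy
    show UpsD ρ₀ x / Upsilon ρ₀ x ≤ UpsD ρ₀ y / Upsilon ρ₀ y
    rw [← hφeq x hx, ← hφeq y hy]
    exact h hx hy hxy
  -- strict antitonicity
  have hanti : StrictAntiOn (PiFun ρ₀) (Set.Ioi (0:ℝ)) := by
    intro x hx y hy hxy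
    have h1 : 1 / y < 1 / x := one_div_lt_one_div_of_lt hx hxy
    have h2 := hmono hx hy hxy.le
    rw [PiFun_eq (show (0:ℝ) < x from hx), PiFun_eq (show (0:ℝ) < y from hy)]
    dsimp only at h2
    linarith
  -- tendsto at 0⁺
  have ht0 : Tendsto (PiFun ρ₀) (nhdsWithin 0 (Set.Ioi (0:ℝ))) atTop := by
    apply tendsto_atTop_mono' _ _
      (tendsto_atTop_add_const_right _
        (-(UpsD ρ₀ 1 / Upsilon ρ₀ 1) + ρ₀ / 2 - Real.eulerMascheroniConstant)
        (by simpa [one_div] using tendsto_inv_nhdsGT_zero (𝕜 := ℝ)))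
    filter_upwards [Ioo_mem_nhdsGT (show (0:ℝ) < 1 by norm_num)] with y hy
    have h2 := hmono (show y ∈ Set.Ioi (0:ℝ) from hy.1) (show (1:ℝ) ∈ Set.Ioi (0:ℝ) by norm_num)
      hy.2.le
    rw [PiFun_eq hy.1, one_div]
    dsimp only at h2
    linarith
  -- lower bound on the logarithmic derivative for large arguments
  have hφ_ge_log : ∀ t : ℝ, 1 < t → Real.log t ≤ UpsD ρ₀ t / Upsilon ρ₀ t := by
    intro t ht
    have h0t : (0:ℝ) < t := by linarith
    have ht1 : (0:ℝ) < t - 1 := by linarith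
    have hslope := (convexOn_log_Upsilon hρ).slope_le_deriv (Set.mem_Ioi.2 ht1)
      (Set.mem_Ioi.2 h0t) (by linarith) (hlogd t (Set.mem_Ioi.2 h0t))
    rw [hφeq t (Set.mem_Ioi.2 h0t), slope_def_field] at hslope
    have hUt := hUpos t h0t
    have hUt1 := hUpos (t - 1) ht1
    have hcomp : t * Upsilon ρ₀ (t - 1) ≤ Upsilon ρ₀ t := by
      have e2 : Real.Gamma (t + 2) = (t + 1) * Real.Gamma (t + 1) := by
        rw [show t + 2 = (t + 1) + 1 by ring, Real.Gamma_add_one (by linarith : t + 1 ≠ 0)]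
      have e1 : Real.Gamma (t + 1) = t * Real.Gamma t := Real.Gamma_add_one h0t.ne'
      unfold Upsilon
      rw [show t - 1 + 2 = t + 1 by ring, show t - 1 + 1 = t by ring, e2, e1]
      have hnn : 0 ≤ ρ₀ * (t * Real.Gamma t) :=
        mul_nonneg hρ.1 (mul_nonneg h0t.le (Real.Gamma_pos_of_pos h0t).le)
      nlinarith [hnn]
    have hlog : Real.log t ≤ Real.log (Upsilon ρ₀ t) - Real.log (Upsilon ρ₀ (t - 1)) := by
      have h := Real.log_le_log (by positivity) hcomp
      rw [Real.log_mul h0t.ne' hUt1.ne'] at h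
      linarith
    have : (Real.log (Upsilon ρ₀ t) - Real.log (Upsilon ρ₀ (t - 1))) / (t - (t - 1))
        = Real.log (Upsilon ρ₀ t) - Real.log (Upsilon ρ₀ (t - 1)) := by
      rw [show t - (t - 1) = 1 by ring, div_one]
    rw [this] at hslope
    linarith
  -- tendsto at ∞
  have htB : Tendsto (PiFun ρ₀) atTop atBot := by
    apply tendsto_atBot_mono' _ _
      (tendsto_atBot_add_const_left _
        (1 + ρ₀ / 2 - Real.eulerMascheroniConstant)
        (tendsto_neg_atTop_atBot.comp tendsto_log_atTop))
    filter_upwards [eventually_gt_atTop (1:ℝ)] with y hy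
    have h1 : 1 / y ≤ 1 := by
      rw [div_le_one (by linarith)]; linarith
    have h2 := hφ_ge_log y hy
    rw [PiFun_eq (by linarith : (0:ℝ) < y)]
    simp only [Function.comp]
    linarith
  refine ⟨hanti, ht0, htB, ?_, ?_⟩
  · -- existence and uniqueness of the zero
    obtain ⟨a, haP, ha0⟩ :=
      ((ht0.eventually (eventually_gt_atTop (0:ℝ))).and self_mem_nhdsWithin).exists
    obtain ⟨b, hbP, hab⟩ :=
      ((htB.eventually (eventually_lt_atBot (0:ℝ))).and (eventually_gt_atTop a)).exists
    have ha0' : (0:ℝ) < a := ha0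
    obtain ⟨w, hw, hw0⟩ := exists_hasDerivWithinAt_eq_of_lt_of_gt hab.le
      (f := fun y => Real.log y - Real.log (Upsilon ρ₀ y)
        + (ρ₀ / 2 - Real.eulerMascheroniConstant) * y)
      (fun x hx => (hasDerivAt_PiFun_primitive hρ (lt_of_lt_of_le ha0' hx.1)).hasDerivWithinAt)
      haP hbP
    have hw0' : (0:ℝ) < w := lt_trans ha0' hw.1
    refine ⟨w, ⟨Set.mem_Ioi.2 hw0', hw0⟩, ?_⟩
    rintro z ⟨hz, hz0⟩
    by_contra hne
    rcases lt_or_gt_of_ne hne with h | h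
    · have := hanti hz (Set.mem_Ioi.2 hw0') h
      rw [hz0, hw0] at this; exact lt_irrefl 0 this
    · have := hanti (Set.mem_Ioi.2 hw0') hz h
      rw [hz0, hw0] at this; exact lt_irrefl 0 this
  · -- the zero lies in (0,1]
    intro y hy hy0
    refine ⟨hy, ?_⟩
    by_contra h
    push_neg at h
    have := hanti (Set.mem_Ioi.2 one_pos) hy h
    rw [hy0] at this
    have h1 := PiFun_one_nonpos hρ
    linarith
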